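/- Let R be a local ring and let 0 → L → M → N → 0 be a short exact sequence of finitely generated R-modules. Then min(depth L, depth N) = min(depth M, depth N). -/

import Mathlib

open CategoryTheory IsLocalRing

universe u

section Prelim

variable (R : Type u) [CommRing R]

/-- The depth of a module over a local ring: the supremum of the lengths of
(weakly) regular sequences on `M` consisting of elements of the maximal ideal. -/
noncomputable def mdepth [IsLocalRing R] (M : Type u) [AddCommGroup M] [Module R M] : ℕ∞ :=
  sSup {n : ℕ∞ | ∃ rs : List R, (rs.length : ℕ∞) = n ∧ (∀ r ∈ rs, r ∈ maximalIdeal R) ∧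
    RingTheory.Sequence.IsWeaklyRegular M rs}

/-- A short exact sequence `0 → L → M → N → 0` of `R`-modules. -/
def SES (L M N : ModuleCat.{u} R) : Prop :=
  ∃ (f : L →ₗ[R] M) (g : M →ₗ[R] N),
    Function.Injective f ∧ Function.Surjective g ∧ LinearMap.ker g = LinearMap.range f

/-- `N` is a direct summand of `M`. -/
def IsSummand (N M : ModuleCat.{u} R) : Prop :=
  ∃ (i : N →ₗ[R] M) (p : M →ₗ[R] N), p.comp i = LinearMap.id

/-- `N` is a (minimal) first syzygy of `M`: the kernel of a minimal free cover of `M`. -/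
def IsSyzygy (M N : ModuleCat.{u} R) : Prop :=
  ∃ (n : ℕ) (f : (Fin n → R) →ₗ[R] M), Function.Surjective f ∧
    LinearMap.ker f ≤ ((⊥ : Ideal R).jacobson) • (⊤ : Submodule R (Fin n → R)) ∧
    Nonempty (N ≃ₗ[R] LinearMap.ker f)

/-- `N` is an `n`-th (minimal) syzygy of `M`. -/
def IsNSyzygy : ℕ → ModuleCat.{u} R → ModuleCat.{u} R → Prop
  | 0, M, N => Nonempty (N ≃ₗ[R] M)
  | n + 1, M, N => ∃ K : ModuleCat.{u} R, IsSyzygy R M K ∧ IsNSyzygy n K N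

/-- The additive closure of a class of modules: closure under finite direct sums
and direct summands. -/
inductive AddClosure (T : Set (ModuleCat.{u} R)) : ModuleCat.{u} R → Prop
  | of {M : ModuleCat.{u} R} : M ∈ T → AddClosure T M
  | prod {M N : ModuleCat.{u} R} : AddClosure T M → AddClosure T N →
      AddClosure T (ModuleCat.of R (M × N))
  | summand {M N : ModuleCat.{u} R} : AddClosure T M → IsSummand R N M → AddClosure T N

/-- `[X]`: the additive closure of `{R} ∪ {Ω^i X : i ≥ 0, X ∈ X}`. -/
def bracket (X : Set (ModuleCat.{u} R)) : Set (ModuleCat.{u} R) :=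
  {M | AddClosure R (insert (ModuleCat.of R R)
    {N | ∃ M₀ ∈ X, ∃ i : ℕ, IsNSyzygy R i M₀ N}) M}

/-- `X ∘ Y`: modules `M` fitting in an exact sequence `0 → X → M → Y → 0`. -/
def circOp (X Y : Set (ModuleCat.{u} R)) : Set (ModuleCat.{u} R) :=
  {M | ∃ X₀ ∈ X, ∃ Y₀ ∈ Y, SES R X₀ M Y₀}

/-- `X • Y = [[X] ∘ [Y]]`. -/
def bull (X Y : Set (ModuleCat.{u} R)) : Set (ModuleCat.{u} R) :=
  bracket R (circOp R (bracket R X) (bracket R Y))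

/-- The ball `[C]_r` of radius `r` centered at `C`. -/
def ball (C : ModuleCat.{u} R) : ℕ → Set (ModuleCat.{u} R)
  | 0 => ∅
  | 1 => bracket R {C}
  | r + 2 => bracket R (circOp R (ball C (r + 1)) (bracket R {C}))

/-- A resolving subcategory of `mod R`. -/
def IsResolving (X : Set (ModuleCat.{u} R)) : Prop :=
  (∀ M ∈ X, Module.Finite R M) ∧
  (ModuleCat.of R R ∈ X) ∧
  (∀ M ∈ X, ∀ N : ModuleCat.{u} R, IsSummand R N M → N ∈ X) ∧
  (∀ L M N : ModuleCat.{u} R, SES R L M N → L ∈ X → N ∈ X → M ∈ X) ∧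
  (∀ L M N : ModuleCat.{u} R, SES R L M N → M ∈ X → N ∈ X → L ∈ X)

end Prelim

section Prelim2

variable (R : Type u) [CommRing R]

/-- The Ext module `Ext^n_R(M, N)`. -/
noncomputable def extM (M N : ModuleCat.{u} R) (n : ℕ) : ModuleCat.{u} R :=
  ((Ext R (ModuleCat.{u} R) n).obj (Opposite.op M)).obj N

/-- A finitely generated module `M` is totally reflexive if `M → M**` is bijective and
`Ext^i(M, R) = 0 = Ext^i(M*, R)` for all `i > 0`. -/
def TotallyReflexive (M : Type u) [AddCommGroup M] [Module R M] : Prop :=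
  Module.Finite R M ∧
  Function.Bijective (Module.Dual.eval R M) ∧
  (∀ i : ℕ, 0 < i →
    Subsingleton (extM R (ModuleCat.of R M) (ModuleCat.of R R) i)) ∧
  (∀ i : ℕ, 0 < i →
    Subsingleton (extM R (ModuleCat.of R (Module.Dual R M)) (ModuleCat.of R R) i))

/-- `C` is a first cosyzygy `Ω⁻¹M` of `M`: the `R`-dual of a minimal first syzygy of `M*`. -/
def IsCosyzygy (M : Type u) [AddCommGroup M] [Module R M] (C : ModuleCat.{u} R) : Prop :=
  ∃ K : ModuleCat.{u} R, IsSyzygy R (ModuleCat.of R (Module.Dual R M)) K ∧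
    Nonempty (C ≃ₗ[R] Module.Dual R K)

/-- `T` is the Auslander transpose of `M`: the cokernel of the dual of the first map
in a minimal free presentation of `M`. -/
def IsTranspose (M T : ModuleCat.{u} R) : Prop :=
  ∃ (n₀ n₁ : ℕ) (d : (Fin n₁ → R) →ₗ[R] (Fin n₀ → R)) (p : (Fin n₀ → R) →ₗ[R] M),
    Function.Surjective p ∧ LinearMap.ker p = LinearMap.range d ∧
    LinearMap.ker p ≤ ((⊥ : Ideal R).jacobson) • (⊤ : Submodule R (Fin n₀ → R)) ∧
    LinearMap.ker d ≤ ((⊥ : Ideal R).jacobson) • (⊤ : Submodule R (Fin n₁ → R)) ∧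
    Nonempty (T ≃ₗ[R] (Module.Dual R (Fin n₁ → R) ⧸ LinearMap.range d.dualMap))

/-- The `I`-torsion submodule `Γ_I(M)`. -/
def torsSub (I : Ideal R) (M : Type u) [AddCommGroup M] [Module R M] : Submodule R M :=
  ⨆ n : ℕ, Submodule.torsionBySet R M ((I ^ n : Ideal R) : Set R)

/-- A Noetherian local ring is Gorenstein iff it has finite self-injective dimension,
iff `Ext^i(k, R) = 0` for all sufficiently large `i`. -/
def IsGorensteinLocal [IsLocalRing R] : Prop :=
  ∃ n : ℕ, ∀ i : ℕ, n < i →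
    Subsingleton (extM R (ModuleCat.of R (ResidueField R)) (ModuleCat.of R R) i)

/-- A maximal Cohen-Macaulay module: finitely generated with depth equal to `dim R`. -/
def IsMCM [IsLocalRing R] (M : ModuleCat.{u} R) : Prop :=
  Module.Finite R M ∧ ((mdepth R M : ℕ∞) : WithBot ℕ∞) = ringKrullDim R

/-- `X` is a thick subcategory of `G`: closed under direct summands and two-out-of-three
for short exact sequences with all terms in `G`. -/
def IsThickIn (G X : Set (ModuleCat.{u} R)) : Prop :=
  X ⊆ G ∧ (∀ M ∈ X, ∀ N : ModuleCat.{u} R, IsSummand R N M → N ∈ X) ∧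
  (∀ L M N : ModuleCat.{u} R, L ∈ G → M ∈ G → N ∈ G → SES R L M N →
    ((L ∈ X ∧ M ∈ X) → N ∈ X) ∧ ((L ∈ X ∧ N ∈ X) → M ∈ X) ∧ ((M ∈ X ∧ N ∈ X) → L ∈ X))

/-- The resolving closure `res M`: the smallest resolving subcategory containing `M`. -/
def resClosure (M : ModuleCat.{u} R) : Set (ModuleCat.{u} R) :=
  ⋂₀ {X | IsResolving R X ∧ M ∈ X}

/-- The ball `|G|_r` (no syzygies, no free modules added). -/
def pball (G : ModuleCat.{u} R) : ℕ → Set (ModuleCat.{u} R)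
  | 0 => ∅
  | 1 => {M | AddClosure R {G} M}
  | r + 2 => {M | AddClosure R
      (circOp R (pball G (r + 1)) {N | AddClosure R {G} N}) M}

/-- An indecomposable module. -/
def Indecomp (M : ModuleCat.{u} R) : Prop :=
  ¬ Subsingleton M ∧ ∀ A B : Submodule R M, IsCompl A B → A = ⊥ ∨ B = ⊥

/-- `N` is the kernel of some surjection from a finite free module onto `M`
(a not-necessarily-minimal syzygy). -/
def IsGSyzygy (M N : ModuleCat.{u} R) : Prop :=
  ∃ (n : ℕ) (f : (Fin n → R) →ₗ[R] M), Function.Surjective f ∧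
    Nonempty (N ≃ₗ[R] LinearMap.ker f)

/-- `N` is an `n`-fold (not-necessarily-minimal) syzygy of `M`. -/
def IsGNSyzygy : ℕ → ModuleCat.{u} R → ModuleCat.{u} R → Prop
  | 0, M, N => Nonempty (N ≃ₗ[R] M)
  | n + 1, M, N => ∃ K : ModuleCat.{u} R, IsGSyzygy R M K ∧ IsGNSyzygy n K N

/-- Projective dimension at most `n`. -/
def PdLE (n : ℕ) (M : ModuleCat.{u} R) : Prop :=
  ∃ N : ModuleCat.{u} R, IsGNSyzygy R n M N ∧ Module.Projective R N

/-- Projective dimension, as an element of `ℕ∞`. -/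
noncomputable def pdim (M : ModuleCat.{u} R) : ℕ∞ :=
  sInf {n : ℕ∞ | ∃ m : ℕ, (m : ℕ∞) = n ∧ PdLE R m M}

end Prelim2

open RingTheory.Sequence Submodule Pointwise IsLocalRing


namespace DepthAux

variable {R : Type u} [CommRing R]

lemma isWeaklyRegular_of_subsingleton (M : Type u) [AddCommGroup M] [Module R M] [Subsingleton M]
    (rs : List R) : IsWeaklyRegular M rs := by
  rw [isWeaklyRegular_iff]
  intro i h
  haveI : Subsingleton (M ⧸ (Ideal.ofList (rs.take i) • ⊤ : Submodule R M)) :=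
    (Submodule.mkQ_surjective _).subsingleton
  exact fun a b _ => Subsingleton.elim a b

lemma weaklyRegular_take {M : Type u} [AddCommGroup M] [Module R M] {rs : List R}
    (h : IsWeaklyRegular M rs) (n : ℕ) : IsWeaklyRegular M (rs.take n) := by
  have h2 := isWeaklyRegular_append_iff M (rs.take n) (rs.drop n)
  rw [List.take_append_drop] at h2
  exact (h2.mp h).1

lemma le_helper {a b : ℕ∞} (h : ∀ n : ℕ, (n : ℕ∞) ≤ a → (n : ℕ∞) ≤ b) : a ≤ b := by
  cases a with
  | top =>
    by_contra hb
    have hbt : b ≠ ⊤ := fun ht => hb (le_of_eq ht.symm)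
    obtain ⟨m, rfl⟩ := WithTop.ne_top_iff_exists.mp hbt |>.imp (fun m hm => hm.symm)
    have := h (m + 1) le_top
    exact absurd (Nat.cast_le.mp this) (by omega)
  | coe n => exact h n le_rfl

variable [IsLocalRing R]

lemma le_mdepth_iff {X : Type u} [AddCommGroup X] [Module R X] (n : ℕ) :
    (n : ℕ∞) ≤ mdepth R X ↔
      ∃ rs : List R, rs.length = n ∧ (∀ r ∈ rs, r ∈ maximalIdeal R) ∧ IsWeaklyRegular X rs := by
  constructor
  · intro hle
    rcases n with _ | k
    · exact ⟨[], rfl, by simp, IsWeaklyRegular.nil R X⟩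
    by_contra h'
    have hub : mdepth R X ≤ (k : ℕ∞) := by
      apply sSup_le
      rintro e ⟨rs, hlen, hmem, hreg⟩
      rw [← hlen]
      by_contra hgt
      push_neg at hgt
      have hlen2 : k + 1 ≤ rs.length := by exact_mod_cast hgt
      refine h' ⟨rs.take (k + 1), ?_, ?_, weaklyRegular_take hreg (k + 1)⟩
      · rw [List.length_take]; omega
      · exact fun r hr => hmem r ((rs.take_sublist (k+1)).subset hr)
    have := hle.trans hub
    exact absurd (Nat.cast_le.mp this) (by omega)
  · rintro ⟨rs, hlen, hmem, hreg⟩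
    exact le_sSup ⟨rs, by rw [hlen], hmem, hreg⟩

end DepthAux
namespace DepthAux2
open RingTheory.Sequence Submodule Pointwise IsLocalRing

variable {R : Type u} [CommRing R]

lemma ass_subset {M : Type u} [AddCommGroup M] [Module R M] [IsNoetherianRing R] (N : Submodule R M) :
    associatedPrimes R M ⊆ associatedPrimes R N ∪ associatedPrimes R (M ⧸ N) := by
  rintro p hp
  obtain ⟨hp, u, rfl⟩ := isAssociatedPrime_iff.mp hp
  by_cases h : ∀ r : R, r • u ∈ N → r • u = 0
  · right
    refine isAssociatedPrime_iff.mpr ⟨hp, Submodule.Quotient.mk u, ?_⟩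
    ext a
    rw [mem_colon_singleton, mem_colon_singleton, Submodule.mem_bot, Submodule.mem_bot,
      ← Submodule.Quotient.mk_smul, Submodule.Quotient.mk_eq_zero]
    exact ⟨fun ha => ha ▸ N.zero_mem, fun ha => h a ha⟩
  · push_neg at h
    obtain ⟨r, hrN, hr0⟩ := h
    left
    refine isAssociatedPrime_iff.mpr ⟨hp, ⟨r • u, hrN⟩, ?_⟩
    ext a
    rw [mem_colon_singleton, mem_colon_singleton, Submodule.mem_bot, Submodule.mem_bot]
    rw [show (a • (⟨r • u, hrN⟩ : N) = 0) ↔ a • (r • u) = 0 from by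
      rw [Subtype.ext_iff]; rfl]
    constructor
    · intro ha
      rw [smul_comm, ha, smul_zero]
    · intro ha
      rw [smul_smul] at ha
      have ham : a * r ∈ colon ⊥ {u} := by
        rw [mem_colon_singleton, Submodule.mem_bot]; exact ha
      rcases hp.mem_or_mem ham with h1 | h1
      · rw [mem_colon_singleton, Submodule.mem_bot] at h1; exact h1
      · rw [mem_colon_singleton, Submodule.mem_bot] at h1; exact absurd h1 hr0

lemma ass_finite (M : Type u) [AddCommGroup M] [Module R M] [IsNoetherianRing R]
    [Module.Finite R M] : (associatedPrimes R M).Finite := by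
  have hno : IsNoetherian R M := inferInstance
  obtain ⟨N, hN, hmax⟩ := (set_has_maximal_iff_noetherian.mpr hno)
    {N : Submodule R M | (associatedPrimes R N).Finite}
    ⟨⊥, by
      simp only [Set.mem_setOf_eq, associatedPrimes.eq_empty_of_subsingleton]
      exact Set.finite_empty⟩
  rcases eq_or_ne N ⊤ with rfl | hne
  · rwa [Set.mem_setOf_eq, LinearEquiv.AssociatedPrimes.eq (Submodule.topEquiv (R := R) (M := M))] at hN
  · exfalso
    haveI : Nontrivial (M ⧸ N) := Submodule.Quotient.nontrivial_iff.mpr hne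
    obtain ⟨p, hp⟩ := associatedPrimes.nonempty R (M ⧸ N)
    obtain ⟨hprime, xb, hann⟩ := isAssociatedPrime_iff.mp hp
    obtain ⟨x, rfl⟩ := Submodule.mkQ_surjective N xb
    have hxN : x ∉ N := by
      intro hx
      apply hprime.ne_top
      rw [hann, Ideal.eq_top_iff_one, mem_colon_singleton, one_smul, Submodule.mem_bot,
        show (N.mkQ x : M ⧸ N) = Submodule.Quotient.mk x from rfl, Submodule.Quotient.mk_eq_zero]
      exact hx
    set N' : Submodule R M := N ⊔ Submodule.span R {x} with hN'def
    have hxN' : x ∈ N' := Submodule.mem_sup_right (Submodule.subset_span rfl)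
    have hlt : N < N' := lt_of_le_of_ne le_sup_left (fun heq => hxN (heq ▸ hxN'))
    set N₀ : Submodule R N' := N.comap N'.subtype with hN₀def
    set x' : N' := ⟨x, hxN'⟩ with hx'def
    set φ : R →ₗ[R] (N' ⧸ N₀) := N₀.mkQ ∘ₗ (LinearMap.toSpanSingleton R N' x') with hφdef
    have hφeval : ∀ c : R, φ c = Submodule.Quotient.mk (c • x') := fun c => rfl
    have hφsurj : Function.Surjective φ := by
      intro w
      obtain ⟨w', rfl⟩ := Submodule.mkQ_surjective N₀ w
      obtain ⟨n, hn, y, hy, hw⟩ := Submodule.mem_sup.mp w'.2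
      obtain ⟨c, rfl⟩ := Submodule.mem_span_singleton.mp hy
      refine ⟨c, ?_⟩
      rw [hφeval, Submodule.mkQ_apply, ← sub_eq_zero, ← Submodule.Quotient.mk_sub,
        Submodule.Quotient.mk_eq_zero, hN₀def, Submodule.mem_comap]
      have h1 : ((c • x' - w' : N') : M) = c • x - (w' : M) := by simp [hx'def]
      rw [Submodule.coe_subtype, h1]
      have h2 : c • x - (w' : M) = -n := by rw [← hw]; abel
      rw [h2]
      exact N.neg_mem hn
    have hker : LinearMap.ker φ = p := by
      ext a
      rw [LinearMap.mem_ker, hφeval, Submodule.Quotient.mk_eq_zero, hN₀def, Submodule.mem_comap,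
        Submodule.coe_subtype, show ((a • x' : N') : M) = a • x from by simp [hx'def],
        hann, mem_colon_singleton, Submodule.mem_bot,
        show (N.mkQ x : M ⧸ N) = Submodule.Quotient.mk x from rfl,
        ← Submodule.Quotient.mk_smul, Submodule.Quotient.mk_eq_zero]
    have e1 : (R ⧸ p) ≃ₗ[R] (N' ⧸ N₀) :=
      (Submodule.quotEquivOfEq p (LinearMap.ker φ) hker.symm).trans
        (LinearMap.quotKerEquivOfSurjective φ hφsurj)
    have e2 : (N₀ : Type u) ≃ₗ[R] N := Submodule.comapSubtypeEquivOfLe le_sup_left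
    have hassN' : (associatedPrimes R N').Finite := by
      apply Set.Finite.subset (Set.Finite.union (s := associatedPrimes R N₀)
        (t := associatedPrimes R (N' ⧸ N₀)) ?_ ?_) (ass_subset N₀)
      · rw [LinearEquiv.AssociatedPrimes.eq e2]
        exact hN
      · rw [← LinearEquiv.AssociatedPrimes.eq e1, associatedPrimes.eq_singleton_of_isPrimary hprime.isPrimary]
        exact Set.finite_singleton _
    exact hmax N' hassN' hlt

end DepthAux2
namespace DepthAux3
open RingTheory.Sequence Submodule Pointwise IsLocalRing DepthAux2

variable {R : Type u} [CommRing R] [IsNoetherianRing R] [IsLocalRing R]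

lemma exists_smulRegular_or (W : Type u) [AddCommGroup W] [Module R W] [Module.Finite R W] :
    (∃ r ∈ maximalIdeal R, IsSMulRegular W r) ∨
      ∃ u : W, u ≠ 0 ∧ ∀ a ∈ maximalIdeal R, a • u = 0 := by
  by_cases h : ∃ r ∈ maximalIdeal R, IsSMulRegular W r
  · exact Or.inl h
  right
  push_neg at h
  have hsub : (maximalIdeal R : Set R) ⊆ ⋃ p ∈ associatedPrimes R W, (p : Set R) := by
    rw [biUnion_associatedPrimes_eq_zero_divisors]
    intro r hr
    obtain ⟨a, b, hab, hne⟩ := Function.not_injective_iff.mp (h r hr)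
    exact ⟨a - b, sub_ne_zero.mpr hne, by rw [smul_sub, hab, sub_self]⟩
  have hfin := ass_finite (R := R) W
  have hsub2 : (maximalIdeal R : Set R) ⊆ ⋃ p ∈ (hfin.toFinset : Finset (Ideal R)), ((p : Ideal R) : Set R) := by
    intro r hr
    obtain ⟨s, ⟨q, rfl⟩, hmem⟩ := hsub hr
    simp only [Set.mem_iUnion] at hmem ⊢
    obtain ⟨hq, hmem⟩ := hmem
    exact ⟨q, hfin.mem_toFinset.mpr hq, hmem⟩
  have havoid := (Ideal.subset_union_prime (s := hfin.toFinset) (f := fun p => p) ⊥ ⊥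
    (fun i hi _ _ => (hfin.mem_toFinset.mp hi).isPrime)).mp hsub2
  obtain ⟨p, hps, hle⟩ := havoid
  obtain ⟨hp, u, rfl⟩ := isAssociatedPrime_iff.mp (hfin.mem_toFinset.mp hps)
  refine ⟨u, ?_, fun a ha => by
    have h := hle ha; rw [mem_colon_singleton, Submodule.mem_bot] at h; exact h⟩
  rintro rfl
  apply hp.ne_top
  rw [Ideal.eq_top_iff_one, mem_colon_singleton, one_smul, Submodule.mem_bot]

lemma exists_common_smulRegular (P Q : Type u) [AddCommGroup P] [Module R P] [Module.Finite R P]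
    [AddCommGroup Q] [Module R Q] [Module.Finite R Q]
    (hP : ∃ r ∈ maximalIdeal R, IsSMulRegular P r)
    (hQ : ∃ r ∈ maximalIdeal R, IsSMulRegular Q r) :
    ∃ r ∈ maximalIdeal R, IsSMulRegular P r ∧ IsSMulRegular Q r := by
  rcases exists_smulRegular_or (R := R) (P × Q) with ⟨r, hr, hreg⟩ | ⟨⟨u₁, u₂⟩, hu, hann⟩
  · refine ⟨r, hr, ?_, ?_⟩
    · intro a b hab
      have : r • ((a, 0) : P × Q) = r • ((b, 0) : P × Q) := by
        rw [Prod.smul_mk, Prod.smul_mk, Prod.mk.injEq]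
        exact ⟨hab, rfl⟩
      exact congrArg Prod.fst (hreg this)
    · intro a b hab
      have : r • ((0, a) : P × Q) = r • ((0, b) : P × Q) := by
        rw [Prod.smul_mk, Prod.smul_mk, Prod.mk.injEq]
        exact ⟨rfl, hab⟩
      exact congrArg Prod.snd (hreg this)
  · exfalso
    obtain ⟨rp, hrp, hregp⟩ := hP
    obtain ⟨rq, hrq, hregq⟩ := hQ
    apply hu
    have h1 : u₁ = 0 := hregp.right_eq_zero_of_smul (congrArg Prod.fst (hann rp hrp))
    have h2 : u₂ = 0 := hregq.right_eq_zero_of_smul (congrArg Prod.snd (hann rq hrq))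
    rw [h1, h2]; rfl

lemma lemmaK {X : Type u} [AddCommGroup X] [Module R X] [Module.Finite R X]
    {x y z : R} (hxm : x ∈ maximalIdeal R) (hym : y ∈ maximalIdeal R) (hzm : z ∈ maximalIdeal R)
    (hx : IsSMulRegular X x) (hy : IsSMulRegular X y)
    (hz : IsSMulRegular (QuotSMulTop y X) z) :
    ∃ z' ∈ maximalIdeal R, IsSMulRegular (QuotSMulTop x X) z' := by
  rcases exists_smulRegular_or (R := R) (QuotSMulTop x X) with h | ⟨ub, hu0, hann⟩
  · exact h
  exfalso
  obtain ⟨u, rfl⟩ := Submodule.mkQ_surjective _ ub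
  have hmem : ∀ a ∈ maximalIdeal R, ∃ w, a • u = x • w := by
    intro a ha
    have h1 := hann a ha
    rw [Submodule.mkQ_apply, ← Submodule.Quotient.mk_smul, Submodule.Quotient.mk_eq_zero] at h1
    obtain ⟨w, -, hw⟩ := h1
    exact ⟨w, hw.symm⟩
  have hunotin : u ∉ x • (⊤ : Submodule R X) := by
    intro hmem'
    apply hu0
    rw [Submodule.mkQ_apply, Submodule.Quotient.mk_eq_zero]
    exact hmem'
  obtain ⟨v, hv⟩ := hmem y hym
  have h2 : (Submodule.Quotient.mk v : QuotSMulTop y X) ≠ 0 := by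
    rw [Ne, Submodule.Quotient.mk_eq_zero]
    rintro ⟨v', -, hv'⟩
    apply hunotin
    have hv'' : y • v' = v := hv'
    have h3 : y • u = y • (x • v') := by rw [hv, ← hv'', smul_comm]
    rw [hy h3]
    exact smul_mem_pointwise_smul v' x ⊤ trivial
  apply h2
  apply hz.right_eq_zero_of_smul
  rw [← Submodule.Quotient.mk_smul, Submodule.Quotient.mk_eq_zero]
  obtain ⟨w, hw⟩ := hmem z hzm
  have h4 : x • (z • v - y • w) = 0 := by
    have h5 : z • (y • u) = y • (x • w) := by rw [smul_comm z y u, hw]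
    rw [hv, smul_comm z x v] at h5
    rw [smul_sub, sub_eq_zero, smul_comm x y w]
    exact h5
  have h6 : z • v = y • w := by
    have h7 := hx.right_eq_zero_of_smul h4
    rwa [sub_eq_zero] at h7
  rw [h6]
  exact smul_mem_pointwise_smul w y ⊤ trivial

end DepthAux3
namespace DepthAux4
open RingTheory.Sequence Submodule Pointwise IsLocalRing DepthAux DepthAux2 DepthAux3

variable {R : Type u} [CommRing R] [IsNoetherianRing R] [IsLocalRing R]

lemma depth_drop : ∀ (n : ℕ) (X : Type u) [AddCommGroup X] [Module R X] [Module.Finite R X]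
    (ys : List R), ys.length = n → (∀ r ∈ ys, r ∈ maximalIdeal R) → IsWeaklyRegular X ys →
    ∀ x ∈ maximalIdeal R, IsSMulRegular X x →
    ∃ zs : List R, zs.length = n - 1 ∧ (∀ r ∈ zs, r ∈ maximalIdeal R) ∧
      IsWeaklyRegular X (x :: zs) := by
  intro n
  induction n using Nat.strong_induction_on with
  | _ n ih =>
    match n with
    | 0 =>
      intro X _ _ _ ys _ _ _ x hxm hx
      exact ⟨[], rfl, by simp, (isWeaklyRegular_singleton_iff X x).mpr hx⟩
    | 1 =>
      intro X _ _ _ ys _ _ _ x hxm hx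
      exact ⟨[], rfl, by simp, (isWeaklyRegular_singleton_iff X x).mpr hx⟩
    | (k + 2) =>
      intro X _ _ _ ys hlen hmem hreg x hxm hx
      match ys, hlen with
      | y1 :: y2 :: yt, hlen =>
        have hy1m : y1 ∈ maximalIdeal R := hmem y1 (by simp)
        have hy2m : y2 ∈ maximalIdeal R := hmem y2 (by simp)
        obtain ⟨hy1, htail⟩ := (isWeaklyRegular_cons_iff X y1 (y2 :: yt)).mp hreg
        have hy2 : IsSMulRegular (QuotSMulTop y1 X) y2 :=
          ((isWeaklyRegular_cons_iff _ y2 yt).mp htail).1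
        -- Kaplansky: maximal ideal has a regular element on X/xX
        obtain ⟨z₀, hz₀m, hz₀⟩ := lemmaK hxm hy1m hy2m hx hy1 hy2
        -- common regular element z on X/xX and X/y1X
        obtain ⟨z, hzm, hzx, hz1⟩ := exists_common_smulRegular (R := R)
          (QuotSMulTop x X) (QuotSMulTop y1 X) ⟨z₀, hz₀m, hz₀⟩ ⟨y2, hy2m, hy2⟩
        -- IH on X/y1X with sequence (y2 :: yt) and element z
        obtain ⟨ws, hwslen, hwsm, hws⟩ := ih (k + 1) (by omega) (QuotSMulTop y1 X)
          (y2 :: yt) (by simpa using hlen) (fun r hr => hmem r (List.mem_cons_of_mem _ hr))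
          htail z hzm hz1
        have h5 : IsWeaklyRegular X (y1 :: z :: ws) :=
          (isWeaklyRegular_cons_iff X y1 (z :: ws)).mpr ⟨hy1, hws⟩
        have hmem5 : ∀ r ∈ (y1 :: z :: ws), r ∈ maximalIdeal R := by
          intro r hr
          rcases hr with _ | ⟨_, hr⟩
          · exact hy1m
          · rcases hr with _ | ⟨_, hr⟩
            · exact hzm
            · exact hwsm r hr
        have h6 : IsWeaklyRegular X (z :: y1 :: ws) :=
          IsLocalRing.isWeaklyRegular_of_perm_of_subset_maximalIdeal h5
            (List.Perm.swap z y1 ws) hmem5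
        obtain ⟨hzX, h7⟩ := (isWeaklyRegular_cons_iff X z (y1 :: ws)).mp h6
        -- x is regular on X/zX
        have hxz : IsSMulRegular (QuotSMulTop z X) x := by
          have e1 : IsWeaklyRegular X [x, z] :=
            (isWeaklyRegular_cons_iff X x [z]).mpr ⟨hx, (isWeaklyRegular_singleton_iff _ z).mpr hzx⟩
          have e2 : IsWeaklyRegular X [z, x] :=
            IsLocalRing.isWeaklyRegular_of_perm_of_subset_maximalIdeal e1
              (List.Perm.swap z x []) (by
                intro r hr
                rcases hr with _ | ⟨_, hr⟩
                · exact hxm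
                · rcases hr with _ | ⟨_, hr⟩
                  · exact hzm
                  · exact absurd hr List.not_mem_nil)
          have := ((isWeaklyRegular_cons_iff X z [x]).mp e2).2
          exact (isWeaklyRegular_singleton_iff _ x).mp this
        -- IH on X/zX with sequence (y1 :: ws) and element x
        obtain ⟨ws', hws'len, hws'm, hws'⟩ := ih (k + 1) (by omega) (QuotSMulTop z X)
          (y1 :: ws) (by simp only [List.length_cons]; omega) (fun r hr => by
            rcases hr with _ | ⟨_, hr⟩
            · exact hy1m
            · exact hwsm r hr)
          h7 x hxm hxz
        have h8 : IsWeaklyRegular X (z :: x :: ws') :=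
          (isWeaklyRegular_cons_iff X z (x :: ws')).mpr ⟨hzX, hws'⟩
        have hmem8 : ∀ r ∈ (z :: x :: ws'), r ∈ maximalIdeal R := by
          intro r hr
          rcases hr with _ | ⟨_, hr⟩
          · exact hzm
          · rcases hr with _ | ⟨_, hr⟩
            · exact hxm
            · exact hws'm r hr
        have h9 : IsWeaklyRegular X (x :: z :: ws') :=
          IsLocalRing.isWeaklyRegular_of_perm_of_subset_maximalIdeal h8
            (List.Perm.swap x z ws') hmem8
        refine ⟨z :: ws', by simp only [List.length_cons]; omega, ?_, h9⟩
        intro r hr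
        rcases hr with _ | ⟨_, hr⟩
        · exact hzm
        · exact hws'm r hr

lemma common_seq : ∀ (n : ℕ) (P Q : Type u) [AddCommGroup P] [Module R P] [Module.Finite R P]
    [AddCommGroup Q] [Module R Q] [Module.Finite R Q]
    (ps qs : List R), ps.length = n → qs.length = n →
    (∀ r ∈ ps, r ∈ maximalIdeal R) → (∀ r ∈ qs, r ∈ maximalIdeal R) →
    IsWeaklyRegular P ps → IsWeaklyRegular Q qs →
    ∃ rs : List R, rs.length = n ∧ (∀ r ∈ rs, r ∈ maximalIdeal R) ∧
      IsWeaklyRegular P rs ∧ IsWeaklyRegular Q rs := by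
  intro n
  induction n with
  | zero =>
    intro P Q _ _ _ _ _ _ ps qs _ _ _ _ _ _
    exact ⟨[], rfl, by simp, IsWeaklyRegular.nil R P, IsWeaklyRegular.nil R Q⟩
  | succ n ihn =>
    intro P Q _ _ _ _ _ _ ps qs hpl hql hpm hqm hpreg hqreg
    match ps, hpl, qs, hql with
    | p :: pt, hpl, q :: qt, hql =>
      have hpm1 : p ∈ maximalIdeal R := hpm p (by simp)
      have hqm1 : q ∈ maximalIdeal R := hqm q (by simp)
      have hp1 : IsSMulRegular P p := ((isWeaklyRegular_cons_iff P p pt).mp hpreg).1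
      have hq1 : IsSMulRegular Q q := ((isWeaklyRegular_cons_iff Q q qt).mp hqreg).1
      obtain ⟨r, hrm, hrP, hrQ⟩ := exists_common_smulRegular (R := R) P Q
        ⟨p, hpm1, hp1⟩ ⟨q, hqm1, hq1⟩
      obtain ⟨ps', hps'len, hps'm, hps'⟩ := depth_drop (n + 1) P (p :: pt) hpl hpm hpreg r hrm hrP
      obtain ⟨qs', hqs'len, hqs'm, hqs'⟩ := depth_drop (n + 1) Q (q :: qt) hql hqm hqreg r hrm hrQ
      have hP2 : IsWeaklyRegular (QuotSMulTop r P) ps' :=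
        ((isWeaklyRegular_cons_iff P r ps').mp hps').2
      have hQ2 : IsWeaklyRegular (QuotSMulTop r Q) qs' :=
        ((isWeaklyRegular_cons_iff Q r qs').mp hqs').2
      obtain ⟨rs', hrs'len, hrs'm, hrs'P, hrs'Q⟩ := ihn (QuotSMulTop r P) (QuotSMulTop r Q)
        ps' qs' (by omega) (by omega) hps'm hqs'm hP2 hQ2
      refine ⟨r :: rs', by simp [hrs'len], ?_, ?_, ?_⟩
      · intro a ha
        rcases ha with _ | ⟨_, ha⟩
        · exact hrm
        · exact hrs'm a ha
      · exact (isWeaklyRegular_cons_iff P r rs').mpr ⟨hrP, hrs'P⟩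
      · exact (isWeaklyRegular_cons_iff Q r rs').mpr ⟨hrQ, hrs'Q⟩

end DepthAux4
namespace DepthAux5
open RingTheory.Sequence Submodule Pointwise IsLocalRing DepthAux DepthAux2 DepthAux3 DepthAux4

variable {R : Type u} [CommRing R]

lemma transfer {L M N : Type u} [AddCommGroup L] [Module R L] [AddCommGroup M] [Module R M]
    [AddCommGroup N] [Module R N]
    (f : L →ₗ[R] M) (g : M →ₗ[R] N)
    (hf : Function.Injective f) (hg : Function.Surjective g)
    (hfg : LinearMap.ker g = LinearMap.range f)
    (rs : List R) (hN : IsWeaklyRegular N rs) :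
    (IsWeaklyRegular L rs → IsWeaklyRegular M rs) ∧
      (IsWeaklyRegular M rs → IsWeaklyRegular L rs) := by
  have hexact : Function.Exact f g := LinearMap.exact_iff.mpr (hfg.trans rfl)
  have main : ∀ i (hi : i < rs.length),
      ((IsSMulRegular (L ⧸ (Ideal.ofList (rs.take i) • ⊤ : Submodule R L)) (rs[i]'hi) →
        IsSMulRegular (M ⧸ (Ideal.ofList (rs.take i) • ⊤ : Submodule R M)) (rs[i]'hi)) ∧
       (IsSMulRegular (M ⧸ (Ideal.ofList (rs.take i) • ⊤ : Submodule R M)) (rs[i]'hi) →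
        IsSMulRegular (L ⧸ (Ideal.ofList (rs.take i) • ⊤ : Submodule R L)) (rs[i]'hi))) := by
    intro i hi
    have hNt : IsWeaklyRegular N (rs.take i) := weaklyRegular_take hN i
    set I := Ideal.ofList (rs.take i) with hIdef
    set fbar := (I • ⊤ : Submodule R L).mapQ (I • ⊤ : Submodule R M) f
      (smul_top_le_comap_smul_top I f) with hfbar
    set gbar := (I • ⊤ : Submodule R M).mapQ (I • ⊤ : Submodule R N) g
      (smul_top_le_comap_smul_top I g) with hgbar
    have hinj : Function.Injective fbar := by
      have hex1 : Function.Exact (0 : PUnit.{u+1} →ₗ[R] L) f := by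
        rw [LinearMap.exact_iff, LinearMap.range_zero, LinearMap.ker_eq_bot]
        exact hf
      have h4 := map_first_exact_on_four_term_right_exact_of_isSMulRegular_last
        (f₁ := (0 : PUnit.{u+1} →ₗ[R] L)) (f₂ := f) (f₃ := g) hex1 hexact hg hNt
      rw [Submodule.mapQ_zero] at h4
      rw [← LinearMap.ker_eq_bot, LinearMap.exact_iff.mp h4, LinearMap.range_zero]
    have hmid := map_first_exact_on_four_term_right_exact_of_isSMulRegular_last
      (f₁ := f) (f₂ := g) (f₃ := (0 : N →ₗ[R] PUnit.{u+1})) hexact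
      (by rw [LinearMap.exact_iff, LinearMap.ker_zero, eq_comm, LinearMap.range_eq_top]; exact hg)
      (fun x => ⟨0, Subsingleton.elim _ _⟩)
      (isWeaklyRegular_of_subsingleton PUnit.{u+1} (rs.take i))
    have hNreg : IsSMulRegular (N ⧸ (Ideal.ofList (rs.take i) • ⊤ : Submodule R N)) rs[i] :=
      hN.regular_mod_prev i hi
    constructor
    · intro hL
      exact isSMulRegular_of_range_eq_ker hinj
        (LinearMap.exact_iff.mp hmid).symm hL hNreg
    · intro hM
      intro a b hab
      apply hinj
      apply hM
      show rs[i]'hi • fbar a = rs[i]'hi • fbar b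
      rw [← map_smul, ← map_smul]
      exact congrArg fbar hab
  constructor
  · intro h
    rw [isWeaklyRegular_iff]
    intro i hi
    exact (main i hi).1 (h.regular_mod_prev i hi)
  · intro h
    rw [isWeaklyRegular_iff]
    intro i hi
    exact (main i hi).2 (h.regular_mod_prev i hi)

end DepthAux5

/-- For a short exact sequence `0 → L → M → N → 0` of finitely
generated modules over a Noetherian local ring,
`min (depth L) (depth N) = min (depth M) (depth N)`. -/
theorem depth_min_eq_of_shortExactSeq
    (R : Type u) [CommRing R] [IsNoetherianRing R] [IsLocalRing R]
    (L M N : Type u) [AddCommGroup L] [Module R L] [AddCommGroup M] [Module R M]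
    [AddCommGroup N] [Module R N]
    [Module.Finite R L] [Module.Finite R M] [Module.Finite R N]
    (f : L →ₗ[R] M) (g : M →ₗ[R] N)
    (hf : Function.Injective f) (hg : Function.Surjective g)
    (hfg : LinearMap.ker g = LinearMap.range f) :
    min (mdepth R L) (mdepth R N) = min (mdepth R M) (mdepth R N) := by
  apply le_antisymm
  · apply DepthAux.le_helper
    intro n hn
    rw [le_min_iff] at hn
    obtain ⟨h1, h2⟩ := hn
    obtain ⟨ls, hlsl, hlsm, hlsr⟩ := (DepthAux.le_mdepth_iff n).mp h1
    obtain ⟨ns, hnsl, hnsm, hnsr⟩ := (DepthAux.le_mdepth_iff n).mp h2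
    obtain ⟨rs, hrsl, hrsm, hrsL, hrsN⟩ :=
      DepthAux4.common_seq n L N ls ns hlsl hnsl hlsm hnsm hlsr hnsr
    have hM : RingTheory.Sequence.IsWeaklyRegular M rs :=
      (DepthAux5.transfer f g hf hg hfg rs hrsN).1 hrsL
    rw [le_min_iff]
    exact ⟨(DepthAux.le_mdepth_iff n).mpr ⟨rs, hrsl, hrsm, hM⟩, h2⟩
  · apply DepthAux.le_helper
    intro n hn
    rw [le_min_iff] at hn
    obtain ⟨h1, h2⟩ := hn
    obtain ⟨ms, hmsl, hmsm, hmsr⟩ := (DepthAux.le_mdepth_iff n).mp h1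
    obtain ⟨ns, hnsl, hnsm, hnsr⟩ := (DepthAux.le_mdepth_iff n).mp h2
    obtain ⟨rs, hrsl, hrsm, hrsM, hrsN⟩ :=
      DepthAux4.common_seq n M N ms ns hmsl hnsl hmsm hnsm hmsr hnsr
    have hL : RingTheory.Sequence.IsWeaklyRegular L rs :=
      (DepthAux5.transfer f g hf hg hfg rs hrsN).2 hrsM
    rw [le_min_iff]
    exact ⟨(DepthAux.le_mdepth_iff n).mpr ⟨rs, hrsl, hrsm, hL⟩, h2⟩
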